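/- Let $X$ be a real random variable whose moment generating function $M_X(u) = \mathbb{E}[e^{uX}]$ is finite on an open interval containing $0$. If $(r, s] \subseteq \{u : M_X(u) < \infty\}$ with $r < 0 < s$, and $h : (p,q) \to \mathbb{R}$ is real-analytic with $(r,s] \subseteq (p,q)$ and $M_X = h$ on $(r, s]$, then $M_X(u) = h(u) < \infty$ for all $u \in (p, q)$. Moreover, if $\lim_{u \nearrow q} h(u) = +\infty$, then $q = \sup\{u : M_X(u) < \infty\}$. -/

import Mathlib

open MeasureTheory Set Filter ProbabilityTheory


open MeasureTheory Set Filter ProbabilityTheory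
open scoped NNReal ENNReal

namespace MgfContinuationAux

variable {Ω : Type*} [MeasurableSpace Ω] {μ : Measure Ω} {X : Ω → ℝ}


lemma exp_abs_le (y : ℝ) : Real.exp |y| ≤ Real.exp y + Real.exp (-y) := by
  rcases abs_cases y with ⟨h, _⟩ | ⟨h, _⟩ <;> rw [h]
  · exact le_add_of_nonneg_right (Real.exp_nonneg _)
  · exact le_add_of_nonneg_left (Real.exp_nonneg _)

lemma pow_div_factorial_le_exp {y : ℝ} (hy : 0 ≤ y) (n : ℕ) :
    y ^ n / (n.factorial : ℝ) ≤ Real.exp y := by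
  calc y ^ n / (n.factorial : ℝ) ≤ ∑ i ∈ Finset.range (n + 1), y ^ i / (i.factorial : ℝ) := by
        refine Finset.single_le_sum (f := fun i => y ^ i / ((i.factorial : ℝ) : ℝ)) ?_ ?_
        · intro i _; positivity
        · simp
    _ ≤ Real.exp y := Real.sum_le_exp_of_nonneg hy _

/-- Convexity of the set where `exp (t * X)` is integrable. -/
lemma integrable_exp_mul_of_le_of_le (hX : Measurable X) {a b t : ℝ}
    (ha : Integrable (fun ω => Real.exp (a * X ω)) μ)
    (hb : Integrable (fun ω => Real.exp (b * X ω)) μ)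
    (h1 : a ≤ t) (h2 : t ≤ b) :
    Integrable (fun ω => Real.exp (t * X ω)) μ := by
  refine (ha.add hb).mono ((hX.const_mul t).exp).aestronglyMeasurable ?_
  filter_upwards with ω
  simp only [Pi.add_apply]
  rw [Real.norm_of_nonneg (Real.exp_nonneg _), Real.norm_of_nonneg (by positivity)]
  rcases le_total (X ω) 0 with hx | hx
  · calc Real.exp (t * X ω) ≤ Real.exp (a * X ω) :=
          Real.exp_le_exp.2 (mul_le_mul_of_nonpos_right h1 hx)
      _ ≤ _ := le_add_of_nonneg_right (Real.exp_nonneg _)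
  · calc Real.exp (t * X ω) ≤ Real.exp (b * X ω) :=
          Real.exp_le_exp.2 (mul_le_mul_of_nonneg_right h2 hx)
      _ ≤ _ := le_add_of_nonneg_left (Real.exp_nonneg _)

lemma integrable_abs_pow_exp (hX : Measurable X) {u0 δ : ℝ} (hδ : 0 < δ)
    (ha : Integrable (fun ω => Real.exp ((u0 - δ) * X ω)) μ)
    (hb : Integrable (fun ω => Real.exp ((u0 + δ) * X ω)) μ) (n : ℕ) :
    Integrable (fun ω => |X ω| ^ n * Real.exp (u0 * X ω)) μ := by
  have hmeas : AEStronglyMeasurable (fun ω => |X ω| ^ n * Real.exp (u0 * X ω)) μ :=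
    (((hX.abs.pow_const n).mul ((hX.const_mul u0).exp))).aestronglyMeasurable
  refine Integrable.mono ((hb.add ha).const_mul ((n.factorial : ℝ) / δ ^ n)) hmeas ?_
  filter_upwards with ω
  rw [Real.norm_of_nonneg (by positivity)]
  have key : |X ω| ^ n ≤ (n.factorial : ℝ) / δ ^ n * Real.exp (δ * |X ω|) := by
    have h1 : (δ * |X ω|) ^ n / (n.factorial : ℝ) ≤ Real.exp (δ * |X ω|) :=
      pow_div_factorial_le_exp (by positivity) n
    have h2 : |X ω| ^ n = (n.factorial : ℝ) / δ ^ n * ((δ * |X ω|) ^ n / (n.factorial : ℝ)) := by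
      field_simp [mul_pow]; ring
    rw [h2]
    have : (0:ℝ) ≤ (n.factorial : ℝ) / δ ^ n := by positivity
    exact mul_le_mul_of_nonneg_left h1 this
  calc |X ω| ^ n * Real.exp (u0 * X ω)
      ≤ ((n.factorial : ℝ) / δ ^ n * Real.exp (δ * |X ω|)) * Real.exp (u0 * X ω) :=
        mul_le_mul_of_nonneg_right key (Real.exp_nonneg _)
    _ ≤ (n.factorial : ℝ) / δ ^ n * ((Real.exp (δ * X ω) + Real.exp (-(δ * X ω))) * Real.exp (u0 * X ω)) := by
        rw [mul_assoc]
        refine mul_le_mul_of_nonneg_left (mul_le_mul_of_nonneg_right ?_ (Real.exp_nonneg _))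
          (by positivity)
        have := exp_abs_le (δ * X ω)
        calc Real.exp (δ * |X ω|) = Real.exp |δ * X ω| := by
              rw [abs_mul, abs_of_pos hδ]
          _ ≤ _ := this
    _ = ‖(n.factorial : ℝ) / δ ^ n * (Real.exp ((u0 + δ) * X ω) + Real.exp ((u0 - δ) * X ω))‖ := by
        rw [Real.norm_of_nonneg (by positivity)]
        rw [add_mul, mul_add, ← Real.exp_add, ← Real.exp_add]
        ring_nf



lemma summable_integral_abs_pow (hX : Measurable X) {u0 δ w : ℝ} (hδ : 0 < δ)
    (ha : Integrable (fun ω => Real.exp ((u0 - δ) * X ω)) μ)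
    (hb : Integrable (fun ω => Real.exp ((u0 + δ) * X ω)) μ)
    (hw : |w| ≤ δ) :
    Summable (fun n : ℕ => |w| ^ n / (n.factorial : ℝ) *
      ∫ ω, |X ω| ^ n * Real.exp (u0 * X ω) ∂μ) := by
  have hgint : ∀ n : ℕ, Integrable
      (fun ω => |w| ^ n / (n.factorial : ℝ) * (|X ω| ^ n * Real.exp (u0 * X ω))) μ :=
    fun n => (integrable_abs_pow_exp hX hδ ha hb n).const_mul _
  refine summable_of_sum_range_le (c := ∫ ω,
      (Real.exp ((u0 + δ) * X ω) + Real.exp ((u0 - δ) * X ω)) ∂μ) ?_ ?_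
  · intro n
    have h0 : 0 ≤ ∫ ω, |X ω| ^ n * Real.exp (u0 * X ω) ∂μ :=
      integral_nonneg fun ω => by positivity
    positivity
  · intro N
    have h1 : ∀ n : ℕ, |w| ^ n / (n.factorial : ℝ) * ∫ ω, |X ω| ^ n * Real.exp (u0 * X ω) ∂μ
        = ∫ ω, |w| ^ n / (n.factorial : ℝ) * (|X ω| ^ n * Real.exp (u0 * X ω)) ∂μ :=
      fun n => (integral_const_mul _ _).symm
    calc ∑ n ∈ Finset.range N,
          |w| ^ n / (n.factorial : ℝ) * ∫ ω, |X ω| ^ n * Real.exp (u0 * X ω) ∂μ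
        = ∫ ω, ∑ n ∈ Finset.range N,
            |w| ^ n / (n.factorial : ℝ) * (|X ω| ^ n * Real.exp (u0 * X ω)) ∂μ := by
          simp_rw [h1]
          exact (integral_finset_sum _ (fun n _ => hgint n)).symm
      _ ≤ _ := by
          refine integral_mono (integrable_finset_sum _ (fun n _ => hgint n)) (hb.add ha) ?_
          intro ω
          simp only [Pi.add_apply]
          have e1 : ∑ n ∈ Finset.range N,
              |w| ^ n / (n.factorial : ℝ) * (|X ω| ^ n * Real.exp (u0 * X ω))
              = (∑ n ∈ Finset.range N, (|w| * |X ω|) ^ n / (n.factorial : ℝ))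
                  * Real.exp (u0 * X ω) := by
            rw [Finset.sum_mul]
            refine Finset.sum_congr rfl fun n _ => ?_
            rw [mul_pow]; ring
          rw [e1]
          have e2 : (∑ n ∈ Finset.range N, (|w| * |X ω|) ^ n / (n.factorial : ℝ))
              ≤ Real.exp (δ * |X ω|) := by
            refine le_trans (Real.sum_le_exp_of_nonneg (by positivity) N) ?_
            exact Real.exp_le_exp.2 (mul_le_mul_of_nonneg_right hw (abs_nonneg _))
          calc (∑ n ∈ Finset.range N, (|w| * |X ω|) ^ n / (n.factorial : ℝ))
                  * Real.exp (u0 * X ω)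
              ≤ Real.exp (δ * |X ω|) * Real.exp (u0 * X ω) :=
                mul_le_mul_of_nonneg_right e2 (Real.exp_nonneg _)
            _ ≤ (Real.exp (δ * X ω) + Real.exp (-(δ * X ω))) * Real.exp (u0 * X ω) := by
                refine mul_le_mul_of_nonneg_right ?_ (Real.exp_nonneg _)
                rw [show δ * |X ω| = |δ * X ω| by rw [abs_mul, abs_of_pos hδ]]
                exact exp_abs_le _
            _ = Real.exp ((u0 + δ) * X ω) + Real.exp ((u0 - δ) * X ω) := by
                rw [add_mul, ← Real.exp_add, ← Real.exp_add]; ring_nf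



lemma integrable_term (hX : Measurable X) {u0 δ : ℝ} (hδ : 0 < δ)
    (ha : Integrable (fun ω => Real.exp ((u0 - δ) * X ω)) μ)
    (hb : Integrable (fun ω => Real.exp ((u0 + δ) * X ω)) μ) (w : ℝ) (n : ℕ) :
    Integrable (fun ω => (w * X ω) ^ n / (n.factorial : ℝ) * Real.exp (u0 * X ω)) μ := by
  refine Integrable.mono ((integrable_abs_pow_exp hX hδ ha hb n).const_mul
      (|w| ^ n / (n.factorial : ℝ)))
    ((((hX.const_mul w).pow_const n).div_const _).mul ((hX.const_mul u0).exp)).aestronglyMeasurable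
    ?_
  filter_upwards with ω
  have e1 : ‖(w * X ω) ^ n / (n.factorial : ℝ) * Real.exp (u0 * X ω)‖
      = |w| ^ n / (n.factorial : ℝ) * (|X ω| ^ n * Real.exp (u0 * X ω)) := by
    rw [Real.norm_eq_abs, abs_mul, abs_div, abs_pow, abs_mul, Real.abs_exp, Nat.abs_cast, mul_pow]
    ring
  rw [e1, Real.norm_of_nonneg (by positivity)]

lemma hasSum_mgf (hX : Measurable X) {u0 δ w : ℝ} (hδ : 0 < δ)
    (ha : Integrable (fun ω => Real.exp ((u0 - δ) * X ω)) μ)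
    (hb : Integrable (fun ω => Real.exp ((u0 + δ) * X ω)) μ)
    (hw : |w| ≤ δ) :
    HasSum (fun n : ℕ => ∫ ω, (w * X ω) ^ n / (n.factorial : ℝ) * Real.exp (u0 * X ω) ∂μ)
      (mgf X μ (u0 + w)) := by
  have hFint := integrable_term hX hδ ha hb w
  have hnorm : ∀ n : ℕ, ∫ ω, ‖(w * X ω) ^ n / (n.factorial : ℝ) * Real.exp (u0 * X ω)‖ ∂μ
      = |w| ^ n / (n.factorial : ℝ) * ∫ ω, |X ω| ^ n * Real.exp (u0 * X ω) ∂μ := by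
    intro n
    rw [← integral_const_mul]
    refine integral_congr_ae (Filter.Eventually.of_forall fun ω => ?_)
    beta_reduce
    rw [Real.norm_eq_abs, abs_mul, abs_div, abs_pow, abs_mul, Real.abs_exp, Nat.abs_cast, mul_pow]
    ring
  have hsum : Summable fun n : ℕ =>
      ∫ ω, ‖(w * X ω) ^ n / (n.factorial : ℝ) * Real.exp (u0 * X ω)‖ ∂μ := by
    refine (summable_integral_abs_pow hX hδ ha hb hw).congr fun n => ?_
    exact (hnorm n).symm
  have H := hasSum_integral_of_summable_integral_norm hFint hsum
  have h2 : ∫ ω, (∑' n : ℕ, (w * X ω) ^ n / (n.factorial : ℝ) * Real.exp (u0 * X ω)) ∂μ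
      = mgf X μ (u0 + w) := by
    refine integral_congr_ae (Filter.Eventually.of_forall fun ω => ?_)
    beta_reduce
    have hs : HasSum (fun n : ℕ => (w * X ω) ^ n / (n.factorial : ℝ) * Real.exp (u0 * X ω))
        (Real.exp (w * X ω) * Real.exp (u0 * X ω)) := by
      have := NormedSpace.expSeries_div_hasSum_exp (w * X ω)
      rw [← Real.exp_eq_exp_ℝ] at this
      exact this.mul_right _
    rw [hs.tsum_eq, ← Real.exp_add]
    congr 1
    ring
  rwa [h2] at H



/-- The Taylor series of the mgf at `u0`. -/
noncomputable def mgfSeries (X : Ω → ℝ) (μ : Measure Ω) (u0 : ℝ) :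
    FormalMultilinearSeries ℝ ℝ ℝ :=
  FormalMultilinearSeries.ofScalars ℝ
    (fun n => (∫ ω, X ω ^ n * Real.exp (u0 * X ω) ∂μ) / (n.factorial : ℝ))

lemma norm_mgfSeries (u0 : ℝ) (n : ℕ) :
    ‖mgfSeries X μ u0 n‖ = |∫ ω, X ω ^ n * Real.exp (u0 * X ω) ∂μ| / (n.factorial : ℝ) := by
  rw [mgfSeries, FormalMultilinearSeries.ofScalars_norm, Real.norm_eq_abs, abs_div, Nat.abs_cast]

lemma hasFPowerSeriesOnBall_mgf (hX : Measurable X) {u0 δ : ℝ} (hδ : 0 < δ)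
    (ha : Integrable (fun ω => Real.exp ((u0 - δ) * X ω)) μ)
    (hb : Integrable (fun ω => Real.exp ((u0 + δ) * X ω)) μ) :
    HasFPowerSeriesOnBall (mgf X μ) (mgfSeries X μ u0) u0 (ENNReal.ofReal δ) := by
  have habs : ∀ n : ℕ, |∫ ω, X ω ^ n * Real.exp (u0 * X ω) ∂μ|
      ≤ ∫ ω, |X ω| ^ n * Real.exp (u0 * X ω) ∂μ := by
    intro n
    refine (le_trans (le_of_eq (Real.norm_eq_abs _).symm) (norm_integral_le_integral_norm _)).trans ?_
    refine le_of_eq (integral_congr_ae (Filter.Eventually.of_forall fun ω => ?_))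
    beta_reduce
    rw [Real.norm_eq_abs, abs_mul, Real.abs_exp, abs_pow]
  constructor
  · -- δ ≤ radius
    have hcoe : ENNReal.ofReal δ = ((δ.toNNReal : ℝ≥0) : ℝ≥0∞) := rfl
    rw [hcoe]
    apply FormalMultilinearSeries.le_radius_of_summable
    refine Summable.of_nonneg_of_le (fun n => by positivity) (fun n => ?_)
      (summable_integral_abs_pow hX hδ ha hb (w := δ) (le_of_eq (abs_of_pos hδ)))
    rw [norm_mgfSeries, Real.coe_toNNReal _ hδ.le, abs_of_pos hδ]
    calc |∫ ω, X ω ^ n * Real.exp (u0 * X ω) ∂μ| / (n.factorial : ℝ) * δ ^ n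
        ≤ (∫ ω, |X ω| ^ n * Real.exp (u0 * X ω) ∂μ) / (n.factorial : ℝ) * δ ^ n := by
          have := habs n
          gcongr
      _ = δ ^ n / (n.factorial : ℝ) * ∫ ω, |X ω| ^ n * Real.exp (u0 * X ω) ∂μ := by ring
  · exact ENNReal.ofReal_pos.2 hδ
  · intro y hy
    rw [EMetric.mem_ball, edist_zero_right, ← ofReal_norm,
      ENNReal.ofReal_lt_ofReal_iff_of_nonneg (norm_nonneg _), Real.norm_eq_abs] at hy
    have H := hasSum_mgf hX hδ ha hb hy.le
    have hterm : ∀ n : ℕ, ∫ ω, (y * X ω) ^ n / (n.factorial : ℝ) * Real.exp (u0 * X ω) ∂μ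
        = mgfSeries X μ u0 n (fun _ => y) := by
      intro n
      rw [mgfSeries, FormalMultilinearSeries.ofScalars_apply_eq, smul_eq_mul]
      rw [show (fun ω => (y * X ω) ^ n / (n.factorial : ℝ) * Real.exp (u0 * X ω))
          = fun ω => y ^ n / (n.factorial : ℝ) * (X ω ^ n * Real.exp (u0 * X ω)) from
        funext fun ω => by rw [mul_pow]; ring]
      rw [integral_const_mul]
      ring
    exact H.congr_fun fun n => (hterm n).symm

lemma analyticAt_mgf (hX : Measurable X) {a b t : ℝ} (hat : a < t) (htb : t < b)
    (ha : Integrable (fun ω => Real.exp (a * X ω)) μ)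
    (hb : Integrable (fun ω => Real.exp (b * X ω)) μ) :
    AnalyticAt ℝ (mgf X μ) t := by
  have hδ : 0 < min (t - a) (b - t) := lt_min (by linarith) (by linarith)
  have h1 : Integrable (fun ω => Real.exp ((t - min (t - a) (b - t)) * X ω)) μ := by
    refine integrable_exp_mul_of_le_of_le hX ha hb ?_ ?_
    · have := min_le_left (t - a) (b - t); linarith
    · linarith
  have h2 : Integrable (fun ω => Real.exp ((t + min (t - a) (b - t)) * X ω)) μ := by
    refine integrable_exp_mul_of_le_of_le hX ha hb ?_ ?_
    · linarith
    · have := min_le_right (t - a) (b - t); linarith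
  exact (hasFPowerSeriesOnBall_mgf hX hδ h1 h2).analyticAt

lemma integrable_exp_of_summable (hX : Measurable X) {u0 δ t : ℝ} (hδ : 0 < δ)
    (ha : Integrable (fun ω => Real.exp ((u0 - δ) * X ω)) μ)
    (hb : Integrable (fun ω => Real.exp ((u0 + δ) * X ω)) μ)
    (hsum : Summable (fun n : ℕ => ‖mgfSeries X μ u0 n‖ * t ^ n)) (ht : 0 ≤ t) :
    Integrable (fun ω => Real.exp ((u0 + t) * X ω)) μ := by
  -- the even part of the series dominates `cosh (t * X) * exp (u0 * X)`
  have hgint : ∀ k : ℕ, Integrable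
      (fun ω => (t * X ω) ^ (2 * k) / (((2 * k).factorial : ℕ) : ℝ) * Real.exp (u0 * X ω)) μ :=
    fun k => integrable_term hX hδ ha hb t (2 * k)
  have hgnn : ∀ k : ℕ, ∀ ω, 0 ≤ (t * X ω) ^ (2 * k) / (((2 * k).factorial : ℕ) : ℝ)
      * Real.exp (u0 * X ω) := by
    intro k ω
    have h1 : (0:ℝ) ≤ (t * X ω) ^ (2 * k) := (even_two_mul k).pow_nonneg _
    positivity
  have hs : ∀ ω, HasSum (fun k : ℕ => (t * X ω) ^ (2 * k) / (((2 * k).factorial : ℕ) : ℝ)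
      * Real.exp (u0 * X ω)) (Real.cosh (t * X ω) * Real.exp (u0 * X ω)) :=
    fun ω => (Real.hasSum_cosh (t * X ω)).mul_right _
  -- summability of the integrals
  have hint_eq : ∀ k : ℕ, ∫ ω, (t * X ω) ^ (2 * k) / (((2 * k).factorial : ℕ) : ℝ)
      * Real.exp (u0 * X ω) ∂μ = ‖mgfSeries X μ u0 (2 * k)‖ * t ^ (2 * k) := by
    intro k
    rw [norm_mgfSeries]
    rw [show (fun ω => (t * X ω) ^ (2 * k) / (((2 * k).factorial : ℕ) : ℝ)
        * Real.exp (u0 * X ω))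
        = fun ω => t ^ (2 * k) / (((2 * k).factorial : ℕ) : ℝ)
            * (X ω ^ (2 * k) * Real.exp (u0 * X ω)) from
      funext fun ω => by rw [mul_pow]; ring]
    rw [integral_const_mul]
    rw [abs_of_nonneg (integral_nonneg fun ω => by
      have h1 : (0:ℝ) ≤ X ω ^ (2 * k) := (even_two_mul k).pow_nonneg _
      positivity)]
    ring
  have hsum2 : Summable (fun k : ℕ => ∫ ω, (t * X ω) ^ (2 * k) / (((2 * k).factorial : ℕ) : ℝ)
      * Real.exp (u0 * X ω) ∂μ) := by
    refine Summable.congr (hsum.comp_injective (fun a b hab => by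
      have : 2 * a = 2 * b := hab
      omega : Function.Injective (fun k : ℕ => 2 * k))) fun k => ?_
    exact (hint_eq k).symm
  -- integrability of cosh * exp via lintegral
  have hcosh_meas : Measurable (fun ω => Real.cosh (t * X ω) * Real.exp (u0 * X ω)) :=
    ((hX.const_mul t).cosh).mul ((hX.const_mul u0).exp)
  have hcosh : Integrable (fun ω => Real.cosh (t * X ω) * Real.exp (u0 * X ω)) μ := by
    refine ⟨hcosh_meas.aestronglyMeasurable, ?_⟩
    rw [hasFiniteIntegral_iff_norm]
    have key : ∫⁻ ω, ENNReal.ofReal ‖Real.cosh (t * X ω) * Real.exp (u0 * X ω)‖ ∂μ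
        = ∑' k : ℕ, ENNReal.ofReal (∫ ω, (t * X ω) ^ (2 * k) / (((2 * k).factorial : ℕ) : ℝ)
            * Real.exp (u0 * X ω) ∂μ) := by
      have e1 : ∀ ω, ENNReal.ofReal ‖Real.cosh (t * X ω) * Real.exp (u0 * X ω)‖
          = ∑' k : ℕ, ENNReal.ofReal ((t * X ω) ^ (2 * k) / (((2 * k).factorial : ℕ) : ℝ)
              * Real.exp (u0 * X ω)) := by
        intro ω
        rw [Real.norm_of_nonneg (by positivity), ← (hs ω).tsum_eq]
        exact ENNReal.ofReal_tsum_of_nonneg (hgnn · ω) (hs ω).summable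
      simp_rw [e1]
      rw [lintegral_tsum fun k => (by exact (((((hX.const_mul t).pow_const (2*k)).div_const _).mul
        ((hX.const_mul u0).exp)).ennreal_ofReal).aemeasurable)]
      refine tsum_congr fun k => ?_
      exact (ofReal_integral_eq_lintegral_ofReal (hgint k)
        (Filter.Eventually.of_forall (hgnn k))).symm
    rw [key, ← ENNReal.ofReal_tsum_of_nonneg (fun k => integral_nonneg (hgnn k)) hsum2]
    exact ENNReal.ofReal_lt_top
  -- conclude
  refine (hcosh.const_mul 2).mono ((hX.const_mul (u0 + t)).exp).aestronglyMeasurable ?_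
  filter_upwards with ω
  rw [Real.norm_of_nonneg (Real.exp_nonneg _), Real.norm_of_nonneg (by positivity)]
  rw [add_mul, Real.exp_add, Real.cosh_eq]
  have h1 : Real.exp (t * X ω) ≤ Real.exp (t * X ω) + Real.exp (-(t * X ω)) :=
    le_add_of_nonneg_right (Real.exp_nonneg _)
  calc Real.exp (u0 * X ω) * Real.exp (t * X ω)
      ≤ Real.exp (u0 * X ω) * (Real.exp (t * X ω) + Real.exp (-(t * X ω))) :=
        mul_le_mul_of_nonneg_left h1 (Real.exp_nonneg _)
    _ = 2 * ((Real.exp (t * X ω) + Real.exp (-(t * X ω))) / 2 * Real.exp (u0 * X ω)) := by ring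







lemma main_right [IsProbabilityMeasure μ] (hX : Measurable X) {r s p q : ℝ}
    (hr : r < 0) (hs : 0 < s)
    (hrs : ∀ u ∈ Ioc r s, Integrable (fun ω => Real.exp (u * X ω)) μ)
    (h : ℝ → ℝ) (hsub : Ioc r s ⊆ Ioo p q)
    (hanal : ∀ x ∈ Ioo p q, AnalyticAt ℝ h x)
    (hagree : ∀ u ∈ Ioc r s, mgf X μ u = h u) :
    ∀ u ∈ Ioo r q, Integrable (fun ω => Real.exp (u * X ω)) μ := by
  have hrs0 : r < s := hr.trans hs
  have hsq : s < q := (hsub ⟨hrs0, le_rfl⟩).2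
  have hpr : p ≤ r := by
    by_contra hc
    push_neg at hc
    have hx : min p s ∈ Ioc r s := ⟨lt_min hc hrs0, min_le_right _ _⟩
    have := (hsub hx).1
    have := min_le_left p s
    linarith
  set S : Set ℝ := {t | t ∈ Icc s q ∧
    ∀ u ∈ Icc s t, Integrable (fun ω => Real.exp (u * X ω)) μ} with hSdef
  have hsS : s ∈ S := by
    refine ⟨⟨le_rfl, hsq.le⟩, fun u hu => ?_⟩
    have hus : u = s := le_antisymm hu.2 hu.1
    exact hrs u ⟨by rw [hus]; exact hrs0, le_of_eq hus⟩
  have hSb : BddAbove S := ⟨q, fun t ht => ht.1.2⟩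
  set b := sSup S with hbdef
  have hsb : s ≤ b := le_csSup hSb hsS
  have hbq : b ≤ q := csSup_le ⟨s, hsS⟩ fun t ht => ht.1.2
  have hb0 : 0 < b := hs.trans_le hsb
  have hrb : r < b := hr.trans hb0
  have C1 : ∀ u, r < u → u < b → Integrable (fun ω => Real.exp (u * X ω)) μ := by
    intro u h1 h2
    rcases le_or_gt u s with h3 | h3
    · exact hrs u ⟨h1, h3⟩
    · obtain ⟨t, htS, hut⟩ := exists_lt_of_lt_csSup ⟨s, hsS⟩ h2
      exact htS.2 u ⟨h3.le, hut.le⟩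
  have hsubrb : Ioo r b ⊆ Ioo p q := fun x hx =>
    ⟨lt_of_le_of_lt hpr hx.1, lt_of_lt_of_le hx.2 hbq⟩
  have heq : EqOn (mgf X μ) h (Ioo r b) := by
    have hmgfa : AnalyticOnNhd ℝ (mgf X μ) (Ioo r b) := by
      intro u hu
      refine analyticAt_mgf hX (show (r + u) / 2 < u by linarith [hu.1])
        (show u < (u + b) / 2 by linarith [hu.2])
        (C1 _ (by linarith [hu.1]) (by linarith [hu.1, hu.2]))
        (C1 _ (by linarith [hu.1, hu.2]) (by linarith [hu.2]))
    have hha : AnalyticOnNhd ℝ h (Ioo r b) := fun u hu => hanal u (hsubrb hu)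
    refine hmgfa.eqOn_of_preconnected_of_eventuallyEq hha isPreconnected_Ioo
      (show (0:ℝ) ∈ Ioo r b from ⟨hr, hb0⟩) ?_
    refine Filter.eventuallyEq_of_mem (Ioo_mem_nhds hr hs) fun u hu => ?_
    exact hagree u ⟨hu.1, hu.2.le⟩
  have hbq' : b = q := by
    by_contra hne
    have hblt : b < q := lt_of_le_of_ne hbq hne
    have hbpq : b ∈ Ioo p q := ⟨by linarith, hblt⟩
    obtain ⟨P, hP⟩ := hanal b hbpq
    obtain ⟨R, hR⟩ := hP
    have hR' : HasFPowerSeriesOnBall h P b (min R 1) :=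
      hR.mono (lt_min hR.r_pos one_pos) (min_le_left _ _)
    set ρ : ℝ := (min R 1).toReal with hρdef
    have hmintop : min R 1 ≠ ⊤ := ne_top_of_le_ne_top (by simp) (min_le_right _ _)
    have hρ : 0 < ρ := ENNReal.toReal_pos (lt_min hR.r_pos one_pos).ne' hmintop
    have hρcoe : ENNReal.ofReal ρ = min R 1 := ENNReal.ofReal_toReal hmintop
    set ε : ℝ := min (ρ / 3) ((b - r) / 2) with hεdef
    have hε : 0 < ε := lt_min (by linarith) (by linarith)
    have hε3 : ε ≤ ρ / 3 := min_le_left _ _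
    have hεbr : ε ≤ (b - r) / 2 := min_le_right _ _
    set u0 : ℝ := b - ε with hu0def
    -- mgf power series at u0
    have hδ2 : (0:ℝ) < ε / 2 := by linarith
    have hE1 : Integrable (fun ω => Real.exp ((u0 - ε / 2) * X ω)) μ :=
      C1 _ (by simp only [hu0def]; linarith) (by simp only [hu0def]; linarith)
    have hE2 : Integrable (fun ω => Real.exp ((u0 + ε / 2) * X ω)) μ :=
      C1 _ (by simp only [hu0def]; linarith) (by simp only [hu0def]; linarith)
    have hmb := hasFPowerSeriesOnBall_mgf hX hδ2 hE1 hE2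
    have hEv : mgf X μ =ᶠ[nhds u0] h := by
      refine Filter.eventuallyEq_of_mem (Ioo_mem_nhds ?_ ?_) heq
      · simp only [hu0def]; linarith
      · simp only [hu0def]; linarith
    have hhAt : HasFPowerSeriesAt h (mgfSeries X μ u0) u0 :=
      hmb.hasFPowerSeriesAt.congr hEv
    -- change origin of P
    have hnε : (‖(-ε : ℝ)‖₊ : ℝ≥0∞) = ENNReal.ofReal ε := by
      rw [← enorm_eq_nnnorm, ← ofReal_norm, norm_neg, Real.norm_of_nonneg hε.le]
    have hCO := hR'.changeOrigin (y := -ε) (by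
      rw [hnε, ← hρcoe]
      exact ENNReal.ofReal_lt_ofReal_iff_of_nonneg hε.le |>.2 (by linarith))
    rw [show b + -ε = u0 by rw [hu0def]; ring] at hCO
    have hhAt2 : HasFPowerSeriesAt h (P.changeOrigin (-ε)) u0 := hCO.hasFPowerSeriesAt
    have hseq : mgfSeries X μ u0 = P.changeOrigin (-ε) :=
      hhAt.eq_formalMultilinearSeries hhAt2
    -- radius bound
    have hrad : ENNReal.ofReal (ρ - ε) ≤ (mgfSeries X μ u0).radius := by
      rw [hseq]
      refine le_trans ?_ hCO.r_le
      rw [hnε, ← hρcoe, ← ENNReal.ofReal_sub _ hε.le]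
    have hsumm : Summable (fun n : ℕ => ‖mgfSeries X μ u0 n‖ * (ρ / 2) ^ n) := by
      have hlt : ((ρ / 2).toNNReal : ℝ≥0∞) < (mgfSeries X μ u0).radius := by
        refine lt_of_lt_of_le ?_ hrad
        have : ((ρ / 2).toNNReal : ℝ≥0∞) = ENNReal.ofReal (ρ / 2) := rfl
        rw [this]
        exact (ENNReal.ofReal_lt_ofReal_iff (by linarith)).2 (by linarith)
      have := (mgfSeries X μ u0).summable_norm_mul_pow hlt
      refine this.congr fun n => ?_
      rw [Real.coe_toNNReal _ (by linarith : (0:ℝ) ≤ ρ / 2)]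
    have hE := integrable_exp_of_summable hX hδ2 hE1 hE2 hsumm (by linarith)
    set β : ℝ := min (u0 + ρ / 2) q with hβdef
    have hu0ρ : b < u0 + ρ / 2 := by simp only [hu0def]; linarith
    have hβS : β ∈ S := by
      constructor
      · exact ⟨le_min (by linarith) hsq.le, min_le_right _ _⟩
      · intro u hu
        refine integrable_exp_mul_of_le_of_le hX (hrs s ⟨hrs0, le_rfl⟩) hE hu.1 ?_
        exact hu.2.trans (min_le_left _ _)
    have : β ≤ b := le_csSup hSb hβS
    have : b < β := lt_min hu0ρ hblt
    linarith
  intro u hu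
  exact C1 u hu.1 (hbq' ▸ hu.2)


end MgfContinuationAux

open MgfContinuationAux

/-- Analytic continuation of the moment generating function: if `M_X` is finite
on a neighborhood of `0`, finite on `(r,s]` with `r < 0 < s`, and agrees on
`(r,s]` with a function `h` real-analytic on `(p,q) ⊇ (r,s]`, then `M_X` is
finite and equals `h` on all of `(p,q)`; moreover if `h(u) → ∞` as `u ↗ q`,
then `q` is the right abscissa of convergence of `M_X`. -/
theorem stmt_15 {Ω : Type*} [MeasurableSpace Ω] (μ : Measure Ω) [IsProbabilityMeasure μ]
    (X : Ω → ℝ) (hX : Measurable X)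
    (hnbhd : ∃ ε > 0, ∀ u : ℝ, |u| < ε → Integrable (fun ω => Real.exp (u * X ω)) μ)
    (r s p q : ℝ) (hr : r < 0) (hs : 0 < s)
    (hrs : ∀ u ∈ Ioc r s, Integrable (fun ω => Real.exp (u * X ω)) μ)
    (h : ℝ → ℝ) (hsub : Ioc r s ⊆ Ioo p q)
    (hanal : ∀ x ∈ Ioo p q, AnalyticAt ℝ h x)
    (hagree : ∀ u ∈ Ioc r s, mgf X μ u = h u) :
    (∀ u ∈ Ioo p q, Integrable (fun ω => Real.exp (u * X ω)) μ ∧ mgf X μ u = h u) ∧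
    (Tendsto h (nhdsWithin q (Iio q)) atTop →
      q = sSup {u : ℝ | Integrable (fun ω => Real.exp (u * X ω)) μ}) := by
  clear hnbhd
  have hrs0 : r < s := hr.trans hs
  have hsq : s < q := (hsub ⟨hrs0, le_rfl⟩).2
  have hpr : p ≤ r := by
    by_contra hc
    push_neg at hc
    have hx : min p s ∈ Ioc r s := ⟨lt_min hc hrs0, min_le_right _ _⟩
    have := (hsub hx).1
    have := min_le_left p s
    linarith
  have hp0 : p < 0 := lt_of_le_of_lt hpr hr
  have hq0 : 0 < q := hs.trans hsq
  have hpq : p < q := hp0.trans hq0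
  -- integrability on (r, q)
  have hrightI : ∀ u ∈ Ioo r q, Integrable (fun ω => Real.exp (u * X ω)) μ :=
    main_right hX hr hs hrs h hsub hanal hagree
  -- integrability on (p, s) via X ↦ -X
  have key : ∀ u : ℝ, (fun ω => Real.exp (u * (-X) ω)) = (fun ω => Real.exp (-u * X ω)) := by
    intro u; funext ω; rw [Pi.neg_apply, mul_neg, neg_mul]
  have hleft : ∀ u ∈ Ioo (-s) (-p), Integrable (fun ω => Real.exp (u * (-X) ω)) μ := by
    refine main_right (μ := μ) (X := -X) hX.neg (r := -s) (s := -r / 2) (p := -q) (q := -p)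
      (by linarith) (by linarith) ?_ (fun u => h (-u)) ?_ ?_ ?_
    · intro u hu
      rw [key u]
      exact hrs (-u) ⟨by linarith [hu.2], by linarith [hu.1]⟩
    · intro u hu
      exact ⟨by linarith [hu.1, hsq], by linarith [hu.2, hpr, hr]⟩
    · intro x hx
      have hx' : -x ∈ Ioo p q := ⟨by linarith [hx.2], by linarith [hx.1]⟩
      have hneg : AnalyticAt ℝ (fun u : ℝ => -u) x := analyticAt_id.neg
      exact (hanal (-x) hx').comp hneg
    · intro u hu
      rw [mgf_neg]
      exact hagree (-u) ⟨by linarith [hu.2], by linarith [hu.1]⟩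
  have hI : ∀ u ∈ Ioo p q, Integrable (fun ω => Real.exp (u * X ω)) μ := by
    intro u hu
    rcases lt_or_ge r u with h1 | h1
    · exact hrightI u ⟨h1, hu.2⟩
    · have := hleft (-u) ⟨by linarith [hu.1, hr, hs], by linarith [hu.1]⟩
      rwa [key (-u), neg_neg] at this
  -- equality on (p, q)
  have heqOn : EqOn (mgf X μ) h (Ioo p q) := by
    have hmgfa : AnalyticOnNhd ℝ (mgf X μ) (Ioo p q) := by
      intro u hu
      refine analyticAt_mgf hX (show (p + u) / 2 < u by linarith [hu.1])
        (show u < (u + q) / 2 by linarith [hu.2])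
        (hI _ ⟨by linarith [hu.1], by linarith [hu.1, hu.2]⟩)
        (hI _ ⟨by linarith [hu.1, hu.2], by linarith [hu.2]⟩)
    refine hmgfa.eqOn_of_preconnected_of_eventuallyEq (fun u hu => hanal u hu)
      isPreconnected_Ioo (show (0:ℝ) ∈ Ioo p q from ⟨hp0, hq0⟩) ?_
    refine Filter.eventuallyEq_of_mem (Ioo_mem_nhds hr hs) fun u hu => ?_
    exact hagree u ⟨hu.1, hu.2.le⟩
  refine ⟨fun u hu => ⟨hI u hu, heqOn hu⟩, fun htend => ?_⟩
  -- second part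
  have hE0 : Integrable (fun ω => Real.exp ((0:ℝ) * X ω)) μ := by
    simpa [Real.exp_zero] using integrable_const (μ := μ) (1 : ℝ)
  have hub : ∀ t ∈ {u : ℝ | Integrable (fun ω => Real.exp (u * X ω)) μ}, t ≤ q := by
    intro t htI
    by_contra hc
    push_neg at hc
    have hqa : AnalyticAt ℝ (mgf X μ) q := analyticAt_mgf hX hq0 hc hE0 htI
    have hcont : Tendsto (mgf X μ) (nhdsWithin q (Iio q)) (nhds (mgf X μ q)) :=
      (hqa.continuousAt.continuousWithinAt : ContinuousWithinAt (mgf X μ) (Iio q) q)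
    have hev : h =ᶠ[nhdsWithin q (Iio q)] mgf X μ := by
      refine Filter.eventuallyEq_of_mem (Ioo_mem_nhdsLT_of_mem ⟨hpq, le_rfl⟩) fun u hu => ?_
      exact (heqOn hu).symm
    have htend' : Tendsto (mgf X μ) (nhdsWithin q (Iio q)) atTop := (htend.congr' hev)
    exact not_tendsto_atTop_of_tendsto_nhds hcont htend'
  refine le_antisymm ?_ (csSup_le ⟨0, hE0⟩ hub)
  calc q = sSup (Ioo p q) := (csSup_Ioo hpq).symm
    _ ≤ _ := csSup_le_csSup ⟨q, hub⟩ (nonempty_Ioo.2 hpq) fun x hx => hI x hx
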